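/- Let A, E ∈ ℝ^{n×n}, B ∈ ℝ^{n×1}, and let S ∈ ℂ^{r×r}, L ∈ ℂ^{1×r} with S = s_0·I_r + N for a single scalar s_0 ∈ ℂ that is not an eigenvalue of the pencil (A, E) (i.e., A − s_0 E is invertible) and N the nilpotent Jordan shift (N_{i,i+1} = 1, else 0), and L = e_1ᵀ = [1, 0, …, 0]. If V ∈ ℂ^{n×r} satisfies A·V − E·V·S = B·L, then the columns v_1, …, v_r of V satisfy v_1 = (A − s_0 E)^{−1}B and v_{k+1} = (A − s_0 E)^{−1}·E·v_k for k = 1, …, r−1; in particular the column span of V equals the Krylov subspace K_r((A − s_0 E)^{−1}E, (A − s_0 E)^{−1}B) whenever V has full column rank. -/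
import Mathlib


open Matrix

/-- Single expansion point duality (one direction): if `S = s₀ I + N` with `N` the
Jordan shift, `L = e₁ᵀ`, `A - s₀E` invertible, and `A V - E V S = B L`, then the
columns of `V` are the rational Krylov vectors `v₁ = (A - s₀E)⁻¹B`,
`v_{k+1} = (A - s₀E)⁻¹ E v_k`; in particular if `V` has full column rank its column
span is the Krylov subspace `K_r((A - s₀E)⁻¹E, (A - s₀E)⁻¹B)`. -/
theorem single_point_sylvester_krylov {n r : ℕ} (hr : 0 < r)
    (A E : Matrix (Fin n) (Fin n) ℝ) (B : Matrix (Fin n) (Fin 1) ℝ)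
    (s₀ : ℂ)
    (Ac Ec : Matrix (Fin n) (Fin n) ℂ) (Bc : Fin n → ℂ)
    (hAc : Ac = A.map Complex.ofReal) (hEc : Ec = E.map Complex.ofReal)
    (hBc : Bc = fun i => (B i 0 : ℂ))
    (hinv : IsUnit (Ac - s₀ • Ec))
    (S : Matrix (Fin r) (Fin r) ℂ)
    (hS : ∀ i j : Fin r, S i j =
      (if i = j then s₀ else 0) + (if (j : ℕ) = (i : ℕ) + 1 then 1 else 0))
    (L : Matrix (Fin 1) (Fin r) ℂ)
    (hL : ∀ j : Fin r, L 0 j = if j = ⟨0, hr⟩ then 1 else 0)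
    (V : Matrix (Fin n) (Fin r) ℂ)
    (hV : Ac * V - Ec * V * S = (Matrix.of fun i (_ : Fin 1) => Bc i) * L) :
    ((fun i => V i ⟨0, hr⟩) = ((Ac - s₀ • Ec)⁻¹).mulVec Bc) ∧
    (∀ k : ℕ, ∀ h : k + 1 < r,
      (fun i => V i ⟨k + 1, h⟩) =
        ((Ac - s₀ • Ec)⁻¹ * Ec).mulVec (fun i => V i ⟨k, Nat.lt_of_succ_lt h⟩)) ∧
    (V.rank = r →
      Submodule.span ℂ (Set.range fun j : Fin r => fun i => V i j) =
        Submodule.span ℂ (Set.range fun k : Fin r =>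
          (((Ac - s₀ • Ec)⁻¹ * Ec) ^ (k : ℕ)).mulVec
            (((Ac - s₀ • Ec)⁻¹).mulVec Bc))) := by
  have hdet : IsUnit (Ac - s₀ • Ec).det :=
    (Matrix.isUnit_iff_isUnit_det _).mp hinv
  have hMl : (Ac - s₀ • Ec)⁻¹ * (Ac - s₀ • Ec) = 1 :=
    Matrix.nonsing_inv_mul _ hdet
  -- first column equation
  have c1 : (Ac - s₀ • Ec).mulVec (fun i => V i ⟨0, hr⟩) = Bc := by
    funext i
    have h := congrFun (congrFun hV i) ⟨0, hr⟩
    simp only [Matrix.sub_apply, Matrix.mul_apply, Matrix.of_apply, hS, hL] at h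
    simp only [Fin.mk.injEq, mul_add, mul_ite, mul_one, mul_zero,
      Finset.sum_add_distrib, Fin.sum_univ_one, Finset.sum_ite_eq',
      Finset.mem_univ, if_true] at h
    simp only [show ∀ x : Fin r, ¬ ((0:ℕ) = (x:ℕ) + 1) from fun x => by omega,
      if_false, Finset.sum_const_zero, add_zero, hL, if_pos rfl, mul_one] at h
    simp only [if_true, mul_one] at h
    simp only [Matrix.mulVec, dotProduct, Matrix.sub_apply,
      Matrix.smul_apply, smul_eq_mul, sub_mul, Finset.sum_sub_distrib]
    rw [← h]
    congr 1
    rw [Finset.sum_mul]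
    exact Finset.sum_congr rfl fun x _ => by ring
  -- recurrence column equations
  have c2 : ∀ k : ℕ, ∀ h : k + 1 < r,
      (Ac - s₀ • Ec).mulVec (fun i => V i ⟨k + 1, h⟩) =
        Ec.mulVec (fun i => V i ⟨k, Nat.lt_of_succ_lt h⟩) := by
    intro k h
    funext i
    have heq := congrFun (congrFun hV i) ⟨k + 1, h⟩
    simp only [Matrix.sub_apply, Matrix.mul_apply, Matrix.of_apply, hS, hL] at heq
    simp only [mul_add, mul_ite, mul_one, mul_zero,
      Finset.sum_add_distrib, Fin.sum_univ_one, Finset.sum_ite_eq',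
      Finset.mem_univ, if_true] at heq
    have hsum : (∑ x : Fin r, if k + 1 = (x:ℕ) + 1 then (∑ j, Ec i j * V j x) else 0)
        = ∑ j, Ec i j * V j ⟨k, Nat.lt_of_succ_lt h⟩ := by
      rw [Finset.sum_eq_single (⟨k, Nat.lt_of_succ_lt h⟩ : Fin r)]
      · simp
      · intro b _ hb
        rw [if_neg]
        intro hc
        exact hb (Fin.ext (by simp; omega))
      · simp
    rw [hsum, hL, if_neg (by simp [Fin.ext_iff]), mul_zero, sub_eq_zero] at heq
    simp only [Matrix.mulVec, dotProduct, Matrix.sub_apply,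
      Matrix.smul_apply, smul_eq_mul, sub_mul, Finset.sum_sub_distrib]
    rw [sub_eq_iff_eq_add, heq, add_comm, Finset.sum_mul]
    congr 1
    exact Finset.sum_congr rfl fun x _ => by ring
  have p1 : (fun i => V i ⟨0, hr⟩) = ((Ac - s₀ • Ec)⁻¹).mulVec Bc := by
    rw [← c1, Matrix.mulVec_mulVec, hMl, Matrix.one_mulVec]
  have p2 : ∀ k : ℕ, ∀ h : k + 1 < r,
      (fun i => V i ⟨k + 1, h⟩) =
        ((Ac - s₀ • Ec)⁻¹ * Ec).mulVec (fun i => V i ⟨k, Nat.lt_of_succ_lt h⟩) := by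
    intro k h
    rw [← Matrix.mulVec_mulVec, ← c2 k h, Matrix.mulVec_mulVec, hMl,
      Matrix.one_mulVec]
  refine ⟨p1, p2, fun _ => ?_⟩
  have col : ∀ m : ℕ, ∀ hm : m < r,
      (fun i => V i ⟨m, hm⟩) =
        (((Ac - s₀ • Ec)⁻¹ * Ec) ^ m).mulVec (((Ac - s₀ • Ec)⁻¹).mulVec Bc) := by
    intro m
    induction m with
    | zero => intro hm; simpa using p1
    | succ k ih =>
      intro hm
      rw [p2 k hm, ih (Nat.lt_of_succ_lt hm), Matrix.mulVec_mulVec, ← pow_succ']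
  have : (fun j : Fin r => fun i => V i j) =
      (fun k : Fin r =>
        (((Ac - s₀ • Ec)⁻¹ * Ec) ^ (k : ℕ)).mulVec
          (((Ac - s₀ • Ec)⁻¹).mulVec Bc)) := by
    funext k
    simpa using col k.val k.isLt
  rw [this]
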